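/- For a joint probability distribution q on a product of finite types α × β, the conditional entropy H(α|β) defined by H(α|β) = −Σ_{a,b} q(a,b) log( q(a,b) / Σ_{a'} q(a',b) ) is a concave function of the joint distribution q (on the set of probability distributions on α × β). -/

import Mathlib

open Real Finset

lemma logsum2 (u₀ v₀ u₁ v₁ : ℝ) (h₀ : 0 ≤ u₀) (h₀' : u₀ ≤ v₀) (h₁ : 0 ≤ u₁)
    (h₁' : u₁ ≤ v₁) :
    (u₀ + u₁) * Real.log ((u₀ + u₁) / (v₀ + v₁)) ≤
      u₀ * Real.log (u₀ / v₀) + u₁ * Real.log (u₁ / v₁) := by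
  have hv₀ : 0 ≤ v₀ := h₀.trans h₀'
  have hv₁ : 0 ≤ v₁ := h₁.trans h₁'
  rcases eq_or_lt_of_le hv₀ with hv0 | hv0
  · have hu0 : u₀ = 0 := le_antisymm (hv0 ▸ h₀') h₀
    simp [hu0, ← hv0]
  rcases eq_or_lt_of_le hv₁ with hv1 | hv1
  · have hu1 : u₁ = 0 := le_antisymm (hv1 ▸ h₁') h₁
    simp [hu1, ← hv1]
  have hs : 0 < v₀ + v₁ := by linarith
  have key := Real.convexOn_mul_log.2 (Set.mem_Ici.2 (div_nonneg h₀ hv₀))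
    (Set.mem_Ici.2 (div_nonneg h₁ hv₁))
    (div_nonneg hv₀ hs.le) (div_nonneg hv₁ hs.le)
    (by rw [← add_div, div_self hs.ne'])
  simp only [smul_eq_mul] at key
  have harg : v₀ / (v₀ + v₁) * (u₀ / v₀) + v₁ / (v₀ + v₁) * (u₁ / v₁)
      = (u₀ + u₁) / (v₀ + v₁) := by
    field_simp
  rw [harg] at key
  have hk := mul_le_mul_of_nonneg_left key hs.le
  calc (u₀ + u₁) * Real.log ((u₀ + u₁) / (v₀ + v₁))
      = (v₀ + v₁) * ((u₀ + u₁) / (v₀ + v₁) * Real.log ((u₀ + u₁) / (v₀ + v₁))) := by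
        field_simp
    _ ≤ (v₀ + v₁) * (v₀ / (v₀ + v₁) * (u₀ / v₀ * Real.log (u₀ / v₀))
          + v₁ / (v₀ + v₁) * (u₁ / v₁ * Real.log (u₁ / v₁))) := hk
    _ = u₀ * Real.log (u₀ / v₀) + u₁ * Real.log (u₁ / v₁) := by
        field_simp

theorem stmt_3 {α β : Type*} [Fintype α] [Fintype β] [Nonempty α] [Nonempty β] :
    ConcaveOn ℝ {q : α × β → ℝ | (∀ x, 0 ≤ q x) ∧ ∑ x, q x = 1}
      (fun q => -∑ a, ∑ b, q (a, b) * Real.log (q (a, b) / ∑ a', q (a', b))) := by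
  have hconv : Convex ℝ {q : α × β → ℝ | (∀ x, 0 ≤ q x) ∧ ∑ x, q x = 1} :=
    convex_stdSimplex ℝ (α × β)
  refine ⟨hconv, ?_⟩
  intro p hp r hr lam mu hlam hmu hsum
  simp only [smul_eq_mul, Pi.add_apply, Pi.smul_apply]
  rw [mul_neg, mul_neg, ← neg_add, neg_le_neg_iff]
  rw [Finset.mul_sum, Finset.mul_sum, ← Finset.sum_add_distrib]
  refine Finset.sum_le_sum fun a _ => ?_
  rw [Finset.mul_sum, Finset.mul_sum, ← Finset.sum_add_distrib]
  refine Finset.sum_le_sum fun b _ => ?_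
  have hterm : ∀ (s : α × β → ℝ) (t : ℝ), 0 ≤ t →
      t * (s (a, b) * Real.log (s (a, b) / ∑ a', s (a', b)))
        = (t * s (a, b)) * Real.log ((t * s (a, b)) / (t * ∑ a', s (a', b))) := by
    intro s t ht
    rcases eq_or_lt_of_le ht with h | h
    · simp [← h]
    · rw [mul_div_mul_left _ _ h.ne', mul_assoc]
  have hsum' : ∀ (s : α × β → ℝ), (∀ x, 0 ≤ s x) → s (a, b) ≤ ∑ a', s (a', b) :=
    fun s hs => Finset.single_le_sum (f := fun a' => s (a', b))
      (fun i _ => hs _) (Finset.mem_univ a)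
  rw [hterm p lam hlam, hterm r mu hmu]
  have h2 : (∑ a', (lam * p (a', b) + mu * r (a', b)))
      = lam * (∑ a', p (a', b)) + mu * (∑ a', r (a', b)) := by
    simp [Finset.sum_add_distrib, Finset.mul_sum]
  rw [h2]
  exact logsum2 _ _ _ _ (mul_nonneg hlam (hp.1 _))
    (mul_le_mul_of_nonneg_left (hsum' p hp.1) hlam)
    (mul_nonneg hmu (hr.1 _))
    (mul_le_mul_of_nonneg_left (hsum' r hr.1) hmu)
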